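/- arXiv:1210.4307 — 2 statements merged into one kernel-verified Lean document; each statement's English description precedes it below -/
import Mathlib

section
/- Let p be a prime, m ≥ 1, and θ a nontrivial additive character of ℚ_p. Let f : GL_m(ℚ_p) → ℂ be a continuous function, and suppose there exists a compact open subgroup C of the additive group (M_m(ℚ_p), +) such that θ(tr(gx)) · f(g) = f(g) for every g ∈ GL_m(ℚ_p) and every x ∈ C. Then there is a Schwartz–Bruhat function ξ : M_m(ℚ_p) → ℂ with f(g) = f(g)·ξ(g) for all g ∈ GL_m(ℚ_p). Consequently, for every Haar measure on the locally compact group GL_m(ℚ_p) and every k ∈ ℤ, the function f is integrable over the set {g ∈ GL_m(ℚ_p) : ‖det g‖_p = p^{−k}}, and there is an integer N such that this integral vanishes for every k < N. -/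
open MeasureTheory

noncomputable instance (p : ℕ) [Fact p.Prime] : MeasurableSpace ℚ_[p] := borel _
instance (p : ℕ) [Fact p.Prime] : BorelSpace ℚ_[p] := ⟨rfl⟩
noncomputable instance (p m : ℕ) [Fact p.Prime] :
    MeasurableSpace (Matrix (Fin m) (Fin m) ℚ_[p]) := borel _
instance (p m : ℕ) [Fact p.Prime] :
    BorelSpace (Matrix (Fin m) (Fin m) ℚ_[p]) := ⟨rfl⟩

section Aux

lemma aux_cos : ∀ (N : ℕ) (α : ℝ), 0 < α → α ≤ Real.pi → Real.pi/3 ≤ 2^N * α →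
    ∃ n : ℕ, Real.cos (2^n * α) ≤ 1/2 := by
  intro N
  induction N with
  | zero =>
    intro α h0 hπ h3
    refine ⟨0, ?_⟩
    simp only [pow_zero, one_mul] at h3 ⊢
    calc Real.cos α ≤ Real.cos (Real.pi/3) :=
          Real.cos_le_cos_of_nonneg_of_le_pi (by positivity) hπ h3
    _ = 1/2 := by rw [Real.cos_pi_div_three]
  | succ N ih =>
    intro α h0 hπ h3
    by_cases hc : Real.pi/3 ≤ α
    · refine ⟨0, ?_⟩
      simp only [pow_zero, one_mul]
      calc Real.cos α ≤ Real.cos (Real.pi/3) :=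
            Real.cos_le_cos_of_nonneg_of_le_pi (by positivity) hπ hc
      _ = 1/2 := by rw [Real.cos_pi_div_three]
    · push_neg at hc
      have hπpos := Real.pi_pos
      have hexp : (2:ℝ)^(N+1)*α = 2^N*(2*α) := by ring
      obtain ⟨n, hn⟩ := ih (2*α) (by linarith) (by linarith) (by rw [← hexp]; exact h3)
      exact ⟨n+1, by convert hn using 2; ring⟩

lemma circle_re (z : ℂ) (hz : ‖z‖ = 1) (h1 : z ≠ 1) :
    ∃ n : ℕ, (z ^ n).re ≤ 1/2 := by
  have hzexp : Complex.exp (Complex.arg z * Complex.I) = z := by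
    conv_rhs => rw [← Complex.norm_mul_exp_arg_mul_I z]
    rw [hz, Complex.ofReal_one, one_mul]
  have hre : ∀ k : ℕ, (z ^ k).re = Real.cos (k * Complex.arg z) := by
    intro k
    conv_lhs => rw [← hzexp]
    rw [← Complex.exp_nat_mul]
    have : (k : ℂ) * (Complex.arg z * Complex.I) = ((k * Complex.arg z : ℝ) : ℂ) * Complex.I := by
      push_cast; ring
    rw [this, Complex.exp_ofReal_mul_I_re]
  have key : ∀ α : ℝ, 0 < α → α ≤ Real.pi → ∃ n : ℕ, Real.cos ((2^n : ℕ) * α) ≤ 1/2 := by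
    intro α h0 hπ
    obtain ⟨N, hN⟩ := pow_unbounded_of_one_lt (Real.pi / (3 * α)) (show (1:ℝ) < 2 by norm_num)
    have : Real.pi/3 ≤ 2^N * α := by
      rw [div_lt_iff₀ (by positivity)] at hN
      nlinarith
    obtain ⟨n, hn⟩ := aux_cos N α h0 hπ this
    exact ⟨n, by push_cast; exact hn⟩
  rcases lt_trichotomy (Complex.arg z) 0 with hneg | hzero | hpos
  · obtain ⟨n, hn⟩ := key (-Complex.arg z) (by linarith) (by linarith [Complex.neg_pi_lt_arg z])
    refine ⟨2^n, ?_⟩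
    rw [hre (2^n)]
    have : Real.cos ((2^n : ℕ) * Complex.arg z) = Real.cos ((2^n : ℕ) * (-Complex.arg z)) := by
      rw [← Real.cos_neg]; ring_nf
    rw [this]; exact hn
  · exfalso
    apply h1
    rw [← hzexp, hzero]
    simp
  · obtain ⟨n, hn⟩ := key (Complex.arg z) hpos (Complex.arg_le_pi z)
    exact ⟨2^n, by rw [hre (2^n)]; exact hn⟩

lemma circle_all_close (z : ℂ) (hz : ‖z‖ = 1)
    (h : ∀ n : ℕ, ‖z ^ n - 1‖ < 1) : z = 1 := by
  by_contra h1
  obtain ⟨n, hn⟩ := circle_re z hz h1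
  have habs : ‖z ^ n‖ = 1 := by rw [norm_pow, hz, one_pow]
  have h2 := h n
  have hns : Complex.normSq (z ^ n - 1) = 2 - 2 * (z ^ n).re := by
    have h3 : Complex.normSq (z ^ n) = 1 := by
      rw [← Complex.sq_norm, habs]; norm_num
    rw [Complex.normSq_apply] at h3 ⊢
    simp only [Complex.sub_re, Complex.sub_im, Complex.one_re, Complex.one_im]
    linear_combination h3
  have : Complex.normSq (z ^ n - 1) < 1 := by
    rw [← Complex.sq_norm]; nlinarith [norm_nonneg (z^n - 1)]
  nlinarith

lemma theta_small (p : ℕ) [Fact p.Prime] (θ : AddChar ℚ_[p] Circle) (hθcont : Continuous θ) :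
    ∃ ε : ℝ, 0 < ε ∧ ∀ t : ℚ_[p], ‖t‖ ≤ ε → θ t = 1 := by
  obtain ⟨δ, hδ, hcl⟩ := Metric.continuous_iff.mp hθcont 0 1 one_pos
  refine ⟨δ/2, by linarith, fun t ht => ?_⟩
  have key : ∀ n : ℕ, ‖(θ t : ℂ) ^ n - 1‖ < 1 := by
    intro n
    have h1 : ‖(n : ℚ_[p]) * t‖ ≤ δ/2 := by
      rw [norm_mul]
      calc ‖(n : ℚ_[p])‖ * ‖t‖ ≤ 1 * ‖t‖ := by
            apply mul_le_mul_of_nonneg_right _ (norm_nonneg _)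
            exact_mod_cast Padic.norm_int_le_one (n : ℤ)
      _ = ‖t‖ := one_mul _
      _ ≤ δ/2 := ht
    have h2 := hcl ((n : ℚ_[p]) * t) (by rw [dist_zero_right]; linarith)
    have h3 : θ ((n : ℚ_[p]) * t) = θ t ^ n := by
      have : (n : ℚ_[p]) * t = n • t := by simp
      rw [this, AddChar.map_nsmul_eq_pow]
    rw [h3, AddChar.map_zero_eq_one] at h2
    have h4 : dist (θ t ^ n) (1 : Circle) = ‖(θ t : ℂ) ^ n - 1‖ := by
      change dist ((θ t ^ n : Circle) : ℂ) ((1 : Circle) : ℂ) = _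
      rw [Complex.dist_eq]
      norm_cast
    rwa [h4] at h2
  exact Circle.coe_eq_one.mp (circle_all_close (θ t : ℂ) (Circle.norm_coe _) key)

lemma norm_det_le (p : ℕ) [Fact p.Prime] (m : ℕ) (r : ℝ) (hr : 1 ≤ r)
    (a : Matrix (Fin m) (Fin m) ℚ_[p]) (ha : ∀ i j, ‖a i j‖ ≤ r) : ‖a.det‖ ≤ r ^ m := by
  rw [Matrix.det_apply]
  apply IsUltrametricDist.norm_sum_le_of_forall_le_of_nonneg (by positivity)
  intro σ _
  have h1 : ‖∏ i, a (σ i) i‖ ≤ r ^ m := by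
    rw [norm_prod]
    calc ∏ i, ‖a (σ i) i‖ ≤ ∏ _i : Fin m, r :=
          Finset.prod_le_prod (fun i _ => norm_nonneg _) (fun i _ => ha _ _)
    _ = r ^ m := by simp
  rcases Int.units_eq_one_or (Equiv.Perm.sign σ) with h | h <;> rw [h] <;> simpa using h1

lemma trace_mul_std (p : ℕ) [Fact p.Prime] (m : ℕ)
    (a : Matrix (Fin m) (Fin m) ℚ_[p]) (i j : Fin m) (c : ℚ_[p]) :
    (a * Matrix.single j i c).trace = a i j * c := by
  rw [Matrix.trace]
  rw [Finset.sum_eq_single i]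
  · simp [Matrix.diag]
  · intro k _ hk
    simp only [Matrix.diag_apply]
    exact Matrix.mul_single_apply_of_ne c j i k k hk a
  · simp

lemma ball_compact (p m : ℕ) [Fact p.Prime] (R : ℝ) :
    IsCompact {b : Matrix (Fin m) (Fin m) ℚ_[p] | ∀ i j, ‖b i j‖ ≤ R} := by
  have h1 : IsCompact ((Set.univ.pi fun _ : Fin m => Set.univ.pi fun _ : Fin m =>
      Metric.closedBall (0:ℚ_[p]) R) : Set (Matrix (Fin m) (Fin m) ℚ_[p])) :=
    isCompact_univ_pi fun _ => isCompact_univ_pi fun _ => isCompact_closedBall _ _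
  have h2 : {b : Matrix (Fin m) (Fin m) ℚ_[p] | ∀ i j, ‖b i j‖ ≤ R} =
      ((Set.univ.pi fun _ : Fin m => Set.univ.pi fun _ : Fin m =>
        Metric.closedBall (0:ℚ_[p]) R) : Set (Matrix (Fin m) (Fin m) ℚ_[p])) := by
    ext b
    constructor
    · intro hb
      exact fun i _ j _ => Metric.mem_closedBall.mpr (by rw [dist_zero_right]; exact hb i j)
    · intro hb i j
      have := hb i (Set.mem_univ i) j (Set.mem_univ j)
      rwa [Metric.mem_closedBall, dist_zero_right] at this
  rw [h2]
  exact h1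

lemma std_cont (p m : ℕ) [Fact p.Prime] (i j : Fin m) :
    Continuous fun c : ℚ_[p] => Matrix.single i j c := by
  apply continuous_matrix
  intro i' j'
  by_cases h : i = i' ∧ j = j'
  · obtain ⟨rfl, rfl⟩ := h
    simpa using continuous_id'
  · simp only [Matrix.single_apply_of_ne _ _ _ _ _ h]
    exact continuous_const

lemma gl_cont (p m : ℕ) [Fact p.Prime] {X : Type*} [TopologicalSpace X]
    (φ : X → GL (Fin m) ℚ_[p])
    (h : Continuous fun x => (φ x : Matrix (Fin m) (Fin m) ℚ_[p])) : Continuous φ := by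
  rw [Units.continuous_iff]
  refine ⟨h, ?_⟩
  have hF : ContinuousOn (fun a : Matrix (Fin m) (Fin m) ℚ_[p] => Ring.inverse a.det • a.adjugate)
      {a : Matrix (Fin m) (Fin m) ℚ_[p] | a.det ≠ 0} := by
    apply ContinuousOn.smul (f := fun a : Matrix (Fin m) (Fin m) ℚ_[p] => Ring.inverse a.det)
      (g := fun a : Matrix (Fin m) (Fin m) ℚ_[p] => a.adjugate)
    · have : ContinuousOn (fun a : Matrix (Fin m) (Fin m) ℚ_[p] => (a.det)⁻¹)
          {a : Matrix (Fin m) (Fin m) ℚ_[p] | a.det ≠ 0} :=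
        ContinuousOn.inv₀ (Continuous.continuousOn (continuous_id.matrix_det)) (fun a ha => ha)
      refine this.congr fun a ha => ?_
      rw [Ring.inverse_eq_inv']
    · exact Continuous.continuousOn (continuous_id.matrix_adjugate)
  have heq : (fun x => (↑(φ x)⁻¹ : Matrix (Fin m) (Fin m) ℚ_[p])) =
      (fun a : Matrix (Fin m) (Fin m) ℚ_[p] => Ring.inverse a.det • a.adjugate) ∘
        (fun x => (φ x : Matrix (Fin m) (Fin m) ℚ_[p])) := by
    funext x
    simp only [Function.comp_apply]
    rw [← Matrix.inv_def, ← Matrix.coe_units_inv]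
  rw [heq]
  apply hF.comp_continuous h
  intro x
  exact Matrix.det_ne_zero_of_right_inverse (φ x).mul_inv

lemma gl_inducing (p m : ℕ) [Fact p.Prime] : Topology.IsInducing
    (Units.val : GL (Fin m) ℚ_[p] → Matrix (Fin m) (Fin m) ℚ_[p]) := by
  constructor
  apply le_antisymm
  · exact continuous_iff_le_induced.mp Units.continuous_val
  · rw [← continuous_id_iff_le]
    exact @gl_cont p m _ (GL (Fin m) ℚ_[p])
      (TopologicalSpace.induced Units.val inferInstance) id continuous_induced_dom

lemma gl_opens (p m : ℕ) [Fact p.Prime] : OpensMeasurableSpace (GL (Fin m) ℚ_[p]) := by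
  constructor
  refine MeasurableSpace.generateFrom_le ?_
  intro U hU
  obtain ⟨V, hV, rfl⟩ := (gl_inducing p m).isOpen_iff.mp hU
  exact ⟨V, hV.measurableSet, rfl⟩

lemma gl_t2 (p m : ℕ) [Fact p.Prime] : T2Space (GL (Fin m) ℚ_[p]) :=
  (Topology.IsEmbedding.mk (gl_inducing p m) Units.val_injective).t2Space

lemma gl_meas_val (p m : ℕ) [Fact p.Prime] :
    Measurable (Units.val : GL (Fin m) ℚ_[p] → Matrix (Fin m) (Fin m) ℚ_[p]) :=
  measurable_iff_comap_le.mpr le_rfl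

end Aux

/-- Let `θ` be a nontrivial additive character of `ℚ_p` and `f` a continuous function on
`GL_m(ℚ_p)`.  If there is a compact open subgroup `C` of `(M_m(ℚ_p), +)` such that
`θ(tr(gx)) · f(g) = f(g)` for all `g ∈ GL_m(ℚ_p)` and `x ∈ C`, then there is a
Schwartz–Bruhat function `ξ` on `M_m(ℚ_p)` with `f = f·ξ` on `GL_m(ℚ_p)`; consequently, for
every Haar measure `ν` on `GL_m(ℚ_p)` and every `k ∈ ℤ`, `f` is integrable on
`{g : ‖det g‖ = p^{-k}}`, and there is `N ∈ ℤ` such that the integral vanishes for `k < N`. -/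
theorem smooth_invariant_function_compactly_supported_det_levels
    (p : ℕ) [Fact p.Prime] (m : ℕ) (hm : 1 ≤ m)
    (θ : AddChar ℚ_[p] Circle) (hθcont : Continuous θ) (hθ : θ ≠ 1)
    (f : GL (Fin m) ℚ_[p] → ℂ) (hf : Continuous f)
    (C : AddSubgroup (Matrix (Fin m) (Fin m) ℚ_[p]))
    (hCcompact : IsCompact (C : Set (Matrix (Fin m) (Fin m) ℚ_[p])))
    (hCopen : IsOpen (C : Set (Matrix (Fin m) (Fin m) ℚ_[p])))
    (hinv : ∀ (g : GL (Fin m) ℚ_[p]), ∀ x ∈ C,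
      (θ (Matrix.trace ((g : Matrix (Fin m) (Fin m) ℚ_[p]) * x)) : ℂ) * f g = f g) :
    (∃ ξ : Matrix (Fin m) (Fin m) ℚ_[p] → ℂ,
        IsLocallyConstant ξ ∧ HasCompactSupport ξ ∧
          ∀ g : GL (Fin m) ℚ_[p], f g = f g * ξ (g : Matrix (Fin m) (Fin m) ℚ_[p])) ∧
      ∀ (ν : Measure (GL (Fin m) ℚ_[p])), ν.IsHaarMeasure →
        (∀ k : ℤ, IntegrableOn f
            {g : GL (Fin m) ℚ_[p] |
              ‖((g : Matrix (Fin m) (Fin m) ℚ_[p]).det)‖ = (p : ℝ) ^ (-k)} ν) ∧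
          ∃ N : ℤ, ∀ k : ℤ, k < N →
            (∫ g in {g : GL (Fin m) ℚ_[p] |
                ‖((g : Matrix (Fin m) (Fin m) ℚ_[p]).det)‖ = (p : ℝ) ^ (-k)}, f g ∂ν) = 0 := by
  classical
  haveI : Nonempty (Fin m) := ⟨⟨0, hm⟩⟩
  obtain ⟨ε, hε, hεtriv⟩ := theta_small p θ hθcont
  obtain ⟨t₀, ht₀⟩ := AddChar.ne_one_iff.mp hθ
  have ht₀0 : t₀ ≠ 0 := by
    intro h
    rw [h, AddChar.map_zero_eq_one] at ht₀
    exact ht₀ rfl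
  have ht₀pos : 0 < ‖t₀‖ := norm_pos_iff.mpr ht₀0
  -- δ : radius such that std basis matrices with small entry lie in C
  have hδ : ∀ ij : Fin m × Fin m, ∃ δ : ℝ, 0 < δ ∧
      ∀ c : ℚ_[p], ‖c‖ < δ → Matrix.single ij.2 ij.1 c ∈ C := by
    rintro ⟨i, j⟩
    have hopen : IsOpen ((fun c : ℚ_[p] => Matrix.single j i c) ⁻¹'
        (C : Set (Matrix (Fin m) (Fin m) ℚ_[p]))) := hCopen.preimage (std_cont p m j i)
    have h0 : (0 : ℚ_[p]) ∈ ((fun c : ℚ_[p] => Matrix.single j i c) ⁻¹'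
        (C : Set (Matrix (Fin m) (Fin m) ℚ_[p]))) := by
      simp only [Set.mem_preimage, Matrix.single_zero, SetLike.mem_coe]
      exact zero_mem C
    obtain ⟨δ, hδpos, hball⟩ := Metric.isOpen_iff.mp hopen 0 h0
    exact ⟨δ, hδpos, fun c hc => hball (by rwa [Metric.mem_ball, dist_zero_right])⟩
  choose δf hδfpos hδfC using hδ
  set δ : ℝ := Finset.univ.inf' Finset.univ_nonempty δf with hδdef
  have hδpos : 0 < δ := by
    rw [hδdef, Finset.lt_inf'_iff]
    exact fun ij _ => hδfpos ij
  set R : ℝ := max 1 (‖t₀‖ / δ) with hRdef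
  have hR1 : (1:ℝ) ≤ R := le_max_left _ _
  have hR0 : (0:ℝ) < R := lt_of_lt_of_le one_pos hR1
  -- ρ : bound on entries of elements of C
  have hρ' : ∀ ij : Fin m × Fin m, ∃ B : ℝ, ∀ x ∈ (C : Set (Matrix (Fin m) (Fin m) ℚ_[p])),
      ‖x ij.1 ij.2‖ ≤ B := by
    rintro ⟨i, j⟩
    have hcont : Continuous (fun x : Matrix (Fin m) (Fin m) ℚ_[p] => x i j) :=
      (continuous_id.matrix_elem i j)
    obtain ⟨B, hB⟩ := (Bornology.IsBounded.exists_norm_le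
      ((hCcompact.image hcont).isBounded))
    exact ⟨B, fun x hx => hB _ (Set.mem_image_of_mem _ hx)⟩
  choose Bf hBf using hρ'
  set ρ : ℝ := max 1 (Finset.univ.sup' Finset.univ_nonempty Bf) with hρdef
  have hρ1 : (1:ℝ) ≤ ρ := le_max_left _ _
  have hρ0 : (0:ℝ) < ρ := lt_of_lt_of_le one_pos hρ1
  have hρbound : ∀ x ∈ (C : Set (Matrix (Fin m) (Fin m) ℚ_[p])), ∀ i j, ‖x i j‖ ≤ ρ := by
    intro x hx i j
    calc ‖x i j‖ ≤ Bf (i, j) := hBf (i, j) x hx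
    _ ≤ Finset.univ.sup' Finset.univ_nonempty Bf := Finset.le_sup' Bf (Finset.mem_univ (i, j))
    _ ≤ ρ := le_max_right _ _
  -- the annihilator K
  set K : Set (Matrix (Fin m) (Fin m) ℚ_[p]) :=
    {a | ∀ x ∈ C, θ (Matrix.trace (a * x)) = 1} with hKdef
  have hKclosed : IsClosed K := by
    have : K = ⋂ x ∈ (C : Set (Matrix (Fin m) (Fin m) ℚ_[p])),
        {a : Matrix (Fin m) (Fin m) ℚ_[p] | θ (Matrix.trace (a * x)) = 1} := by
      ext a
      simp only [hKdef, Set.mem_setOf_eq, Set.mem_iInter, SetLike.mem_coe]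
    rw [this]
    refine isClosed_biInter fun x hx => ?_
    have hcont : Continuous fun a : Matrix (Fin m) (Fin m) ℚ_[p] =>
        θ (Matrix.trace (a * x)) :=
      hθcont.comp ((continuous_id.matrix_mul continuous_const).matrix_trace)
    exact isClosed_eq hcont continuous_const
  have hKbound : ∀ a ∈ K, ∀ i j, ‖a i j‖ ≤ R := by
    intro a ha i j
    by_contra hgt
    push_neg at hgt
    have haij : a i j ≠ 0 := by
      intro h
      rw [h, norm_zero] at hgt
      exact absurd hgt (not_lt.mpr (le_of_lt hR0))
    set c : ℚ_[p] := t₀ / a i j with hcdef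
    have hc : ‖c‖ < δ := by
      rw [hcdef, norm_div]
      rw [div_lt_iff₀ (norm_pos_iff.mpr haij)]
      have h1 : ‖t₀‖ / δ < ‖a i j‖ := lt_of_le_of_lt (le_max_right _ _) hgt
      rw [div_lt_iff₀ hδpos] at h1
      linarith [mul_comm δ (‖a i j‖)]
    have hcδf : ‖c‖ < δf (i, j) := lt_of_lt_of_le hc
      (Finset.inf'_le δf (Finset.mem_univ (i, j)))
    have hmem : Matrix.single j i c ∈ C := hδfC (i, j) c hcδf
    have := ha _ hmem
    rw [trace_mul_std p m a i j c, hcdef, mul_div_cancel₀ _ haij] at this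
    exact ht₀ this
  have hKcompact : IsCompact K :=
    (ball_compact p m R).of_isClosed_subset hKclosed (fun a ha => hKbound a ha)
  have hKopen : IsOpen K := by
    rw [isOpen_iff_mem_nhds]
    intro a ha
    have hsub : (⋂ i : Fin m, ⋂ j : Fin m,
        (fun b : Matrix (Fin m) (Fin m) ℚ_[p] => b i j) ⁻¹'
          Metric.closedBall (a i j) (ε/ρ)) ⊆ K := by
      intro b hb
      have hball : ∀ i j : Fin m, ‖b i j - a i j‖ ≤ ε/ρ := by
        intro i j
        have := Set.mem_iInter.mp (Set.mem_iInter.mp hb i) j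
        rwa [Set.mem_preimage, Metric.mem_closedBall, dist_eq_norm] at this
      intro x hx
      have hsplit : b * x = a * x + (b - a) * x := by
        rw [sub_mul]
        abel
      have htr : ‖Matrix.trace ((b - a) * x)‖ ≤ ε := by
        rw [Matrix.trace]
        apply IsUltrametricDist.norm_sum_le_of_forall_le_of_nonneg (le_of_lt hε)
        intro k _
        simp only [Matrix.diag_apply, Matrix.mul_apply]
        apply IsUltrametricDist.norm_sum_le_of_forall_le_of_nonneg (le_of_lt hε)
        intro l _
        rw [norm_mul]
        have h1 : ‖(b - a) k l‖ ≤ ε/ρ := by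
          rw [Matrix.sub_apply]
          exact hball k l
        have h2 : ‖x l k‖ ≤ ρ := hρbound x hx l k
        calc ‖(b - a) k l‖ * ‖x l k‖ ≤ (ε/ρ) * ρ :=
              mul_le_mul h1 h2 (norm_nonneg _) (by positivity)
        _ = ε := div_mul_cancel₀ ε (ne_of_gt hρ0)
      have hθtr : θ (Matrix.trace ((b - a) * x)) = 1 := hεtriv _ htr
      rw [hsplit, Matrix.trace_add, AddChar.map_add_eq_mul, ha x hx, hθtr, one_mul]
    refine Filter.mem_of_superset ?_ hsub
    refine Filter.iInter_mem.mpr fun i => Filter.iInter_mem.mpr fun j => ?_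
    exact (continuous_id.matrix_elem i j).continuousAt.preimage_mem_nhds
      (Metric.closedBall_mem_nhds _ (by positivity))
  -- the Schwartz-Bruhat function
  set ξ : Matrix (Fin m) (Fin m) ℚ_[p] → ℂ := fun a => if a ∈ K then 1 else 0 with hξdef
  have hfzero : ∀ g : GL (Fin m) ℚ_[p],
      (g : Matrix (Fin m) (Fin m) ℚ_[p]) ∉ K → f g = 0 := by
    intro g hg
    simp only [hKdef, Set.mem_setOf_eq, not_forall] at hg
    obtain ⟨x, hx, hne⟩ := hg
    have h1 := hinv g x hx
    have h2 : ((θ (Matrix.trace ((g : Matrix (Fin m) (Fin m) ℚ_[p]) * x)) : ℂ) - 1) * f g = 0 := by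
      rw [sub_mul, one_mul, h1, sub_self]
    rcases mul_eq_zero.mp h2 with h | h
    · exact absurd (Circle.coe_eq_one.mp (sub_eq_zero.mp h)) hne
    · exact h
  constructor
  · refine ⟨ξ, ?_, ?_, ?_⟩
    · -- locally constant
      intro s
      by_cases h1 : (1:ℂ) ∈ s <;> by_cases h0 : (0:ℂ) ∈ s
      · have : ξ ⁻¹' s = Set.univ := by
          ext a
          simp only [Set.mem_preimage, Set.mem_univ, iff_true, hξdef]
          split_ifs <;> assumption
        rw [this]; exact isOpen_univ
      · have : ξ ⁻¹' s = K := by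
          ext a
          simp only [Set.mem_preimage, hξdef]
          split_ifs with h <;> simp [h, h1, h0]
        rw [this]; exact hKopen
      · have : ξ ⁻¹' s = Kᶜ := by
          ext a
          simp only [Set.mem_preimage, hξdef, Set.mem_compl_iff]
          split_ifs with h <;> simp [h, h1, h0]
        rw [this]; exact hKclosed.isOpen_compl
      · have : ξ ⁻¹' s = ∅ := by
          ext a
          simp only [Set.mem_preimage, Set.mem_empty_iff_false, iff_false, hξdef]
          split_ifs <;> assumption
        rw [this]; exact isOpen_empty
    · -- compact support
      apply IsCompact.of_isClosed_subset hKcompact (isClosed_tsupport ξ)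
      apply closure_minimal _ hKclosed
      intro a ha
      by_contra hK
      apply ha
      simp only [hξdef, Function.mem_support, ne_eq, not_not] at *
      rw [if_neg hK]
    · intro g
      by_cases hg : (g : Matrix (Fin m) (Fin m) ℚ_[p]) ∈ K
      · rw [hξdef]
        simp only [if_pos hg, mul_one]
      · rw [hfzero g hg, hξdef]
        simp only [if_neg hg, mul_zero, zero_mul]
  · intro ν hν
    haveI := hν
    haveI := gl_opens p m
    haveI := gl_t2 p m
    set T : Set (GL (Fin m) ℚ_[p]) := {g | (g : Matrix (Fin m) (Fin m) ℚ_[p]) ∈ K} with hTdef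
    have hTmeas : MeasurableSet T := (gl_meas_val p m) hKclosed.measurableSet
    have hSmeas : ∀ r : ℝ, MeasurableSet
        {g : GL (Fin m) ℚ_[p] | ‖((g : Matrix (Fin m) (Fin m) ℚ_[p]).det)‖ = r} := by
      intro r
      exact (gl_meas_val p m)
        (isClosed_eq ((continuous_id.matrix_det).norm) continuous_const).measurableSet
    -- adjugate bound
    have hadj : ∀ a ∈ K, ∀ i j, ‖a.adjugate i j‖ ≤ R ^ m := by
      intro a ha i j
      rw [Matrix.adjugate_apply]
      apply norm_det_le p m R hR1
      intro i' j'
      rw [Matrix.updateRow_apply]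
      split_ifs with h
      · rw [Pi.single_apply]
        split_ifs
        · simpa using hR1
        · simpa using le_of_lt hR0
      · exact hKbound a ha i' j'
    -- compactness of the level sets intersected with T
    have hAcompact : ∀ k : ℤ, IsCompact ({g : GL (Fin m) ℚ_[p] |
        ‖((g : Matrix (Fin m) (Fin m) ℚ_[p]).det)‖ = (p : ℝ) ^ (-k)} ∩ T) := by
      intro k
      set R2 : ℝ := (p : ℝ) ^ k * R ^ m with hR2def
      -- inverse entry bound
      have hinvb : ∀ g : GL (Fin m) ℚ_[p], (g : Matrix (Fin m) (Fin m) ℚ_[p]) ∈ K →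
          ‖((g : Matrix (Fin m) (Fin m) ℚ_[p]).det)‖ = (p : ℝ) ^ (-k) →
          ∀ i j, ‖(↑g⁻¹ : Matrix (Fin m) (Fin m) ℚ_[p]) i j‖ ≤ R2 := by
        intro g hgK hgdet i j
        have h1 : (↑g⁻¹ : Matrix (Fin m) (Fin m) ℚ_[p]) =
            Ring.inverse ((g : Matrix (Fin m) (Fin m) ℚ_[p]).det) •
              (g : Matrix (Fin m) (Fin m) ℚ_[p]).adjugate := by
          rw [Matrix.coe_units_inv, Matrix.inv_def]
        rw [h1, Matrix.smul_apply, smul_eq_mul, norm_mul, Ring.inverse_eq_inv', norm_inv, hgdet]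
        rw [hR2def, ← zpow_neg, neg_neg]
        apply mul_le_mul_of_nonneg_left (hadj _ hgK i j)
        positivity
      set W : Set ((Matrix (Fin m) (Fin m) ℚ_[p]) × (Matrix (Fin m) (Fin m) ℚ_[p])) :=
        {w | w.1 ∈ K ∧ ‖w.1.det‖ = (p : ℝ) ^ (-k) ∧ w.1 * w.2 = 1 ∧ w.2 * w.1 = 1 ∧
          ∀ i j, ‖w.2 i j‖ ≤ R2} with hWdef
      have hW5 : IsClosed {w : (Matrix (Fin m) (Fin m) ℚ_[p]) × (Matrix (Fin m) (Fin m) ℚ_[p]) |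
          ∀ i j, ‖w.2 i j‖ ≤ R2} := by
        have heq : {w : (Matrix (Fin m) (Fin m) ℚ_[p]) × (Matrix (Fin m) (Fin m) ℚ_[p]) |
            ∀ i j, ‖w.2 i j‖ ≤ R2} = ⋂ i : Fin m, ⋂ j : Fin m,
              {w : (Matrix (Fin m) (Fin m) ℚ_[p]) × (Matrix (Fin m) (Fin m) ℚ_[p]) |
                ‖w.2 i j‖ ≤ R2} := by
          ext w
          simp only [Set.mem_setOf_eq, Set.mem_iInter]
        rw [heq]
        exact isClosed_iInter fun i => isClosed_iInter fun j =>
          isClosed_le ((continuous_snd.matrix_elem i j).norm) continuous_const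
      have hWclosed : IsClosed W :=
        (hKclosed.preimage continuous_fst).inter
          ((isClosed_eq ((continuous_fst.matrix_det).norm) continuous_const).inter
            ((isClosed_eq (continuous_fst.matrix_mul continuous_snd) continuous_const).inter
              ((isClosed_eq (continuous_snd.matrix_mul continuous_fst) continuous_const).inter
                hW5)))
      have hWcompact : IsCompact W := by
        apply IsCompact.of_isClosed_subset ((ball_compact p m R).prod (ball_compact p m R2))
          hWclosed
        rintro ⟨a, b⟩ ⟨h1, _, _, _, h5⟩
        exact ⟨hKbound a h1, h5⟩
      -- the map from W to GL
      haveI : CompactSpace W := isCompact_iff_compactSpace.mp hWcompact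
      set ψ : W → GL (Fin m) ℚ_[p] := fun w =>
        ⟨w.1.1, w.1.2, w.2.2.2.1, w.2.2.2.2.1⟩ with hψdef
      have hψcont : Continuous ψ := by
        apply gl_cont p m
        exact continuous_fst.comp continuous_subtype_val
      have himg : ({g : GL (Fin m) ℚ_[p] |
          ‖((g : Matrix (Fin m) (Fin m) ℚ_[p]).det)‖ = (p : ℝ) ^ (-k)} ∩ T) = Set.range ψ := by
        ext g
        constructor
        · rintro ⟨hgdet, hgT⟩
          refine ⟨⟨((g : Matrix (Fin m) (Fin m) ℚ_[p]),
            (↑g⁻¹ : Matrix (Fin m) (Fin m) ℚ_[p])), hgT, hgdet, ?_, ?_, hinvb g hgT hgdet⟩, ?_⟩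
          · exact g.mul_inv
          · exact g.inv_mul
          · apply Units.ext
            rfl
        · rintro ⟨w, rfl⟩
          exact ⟨w.2.2.1, w.2.1⟩
      rw [himg]
      exact isCompact_range hψcont
    have hInt : ∀ k : ℤ, IntegrableOn f {g : GL (Fin m) ℚ_[p] |
        ‖((g : Matrix (Fin m) (Fin m) ℚ_[p]).det)‖ = (p : ℝ) ^ (-k)} ν := by
      intro k
      set S : Set (GL (Fin m) ℚ_[p]) := {g : GL (Fin m) ℚ_[p] |
        ‖((g : Matrix (Fin m) (Fin m) ℚ_[p]).det)‖ = (p : ℝ) ^ (-k)} with hSdef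
      have h1 : IntegrableOn f (S ∩ T) ν :=
        (hf.continuousOn).integrableOn_compact' (hAcompact k)
          ((hSmeas _).inter hTmeas)
      have h2 : IntegrableOn f (S \ T) ν := by
        rw [integrableOn_congr_fun (g := fun _ => (0:ℂ))
          (fun x hx => hfzero x hx.2) ((hSmeas _).diff hTmeas)]
        exact integrableOn_zero
      have := h1.union h2
      rwa [Set.inter_union_diff] at this
    refine ⟨hInt, ?_⟩
    obtain ⟨n, hn⟩ := pow_unbounded_of_one_lt (R ^ m)
      (show (1:ℝ) < p by exact_mod_cast (Fact.out : p.Prime).one_lt)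
    refine ⟨-(n:ℤ), fun k hk => ?_⟩
    apply setIntegral_eq_zero_of_forall_eq_zero
    intro g hg
    by_contra hne
    have hgK : (g : Matrix (Fin m) (Fin m) ℚ_[p]) ∈ K := by
      by_contra h
      exact hne (hfzero g h)
    have hdetle : ‖((g : Matrix (Fin m) (Fin m) ℚ_[p]).det)‖ ≤ R ^ m :=
      norm_det_le p m R hR1 _ (hKbound _ hgK)
    have hgdet : ‖((g : Matrix (Fin m) (Fin m) ℚ_[p]).det)‖ = (p : ℝ) ^ (-k) := hg
    have hplt : (R:ℝ) ^ m < (p:ℝ) ^ (-k) := by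
      calc (R:ℝ) ^ m < (p:ℝ) ^ (n:ℤ) := by rwa [zpow_natCast]
      _ ≤ (p:ℝ) ^ (-k) := by
          apply zpow_le_zpow_right₀
          · exact_mod_cast le_of_lt (Fact.out : p.Prime).one_lt
          · omega
    rw [hgdet] at hdetle
    linarith
end

section
/- Let p be a prime, m ≥ 1, θ a nontrivial additive character of ℚ_p, and μ a Haar measure on (M_m(ℚ_p), +). Let f : M_m(ℚ_p) → ℂ be locally constant and μ-integrable. If the Fourier transform f̂(g) = ∫ f(y) θ(tr(gy)) dμ(y) vanishes for every invertible matrix g ∈ GL_m(ℚ_p), then f is identically zero. -/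
open MeasureTheory

instance (p m : ℕ) [Fact p.Prime] : SecondCountableTopology (Matrix (Fin m) (Fin m) ℚ_[p]) :=
  inferInstanceAs (SecondCountableTopology (Fin m → Fin m → ℚ_[p]))
instance (p m : ℕ) [Fact p.Prime] : SigmaCompactSpace (Matrix (Fin m) (Fin m) ℚ_[p]) :=
  inferInstanceAs (SigmaCompactSpace (Fin m → Fin m → ℚ_[p]))

namespace PadicFourierAux

lemma aux_w_eq_one {w : ℂ} (hw : ∀ n : ℕ, ‖w ^ n - 1‖ ≤ 2⁻¹) : w = 1 := by
  by_contra hne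
  have hsub : w - 1 ≠ 0 := sub_ne_zero.mpr hne
  have hnorm : (0:ℝ) < ‖w - 1‖ := norm_pos_iff.mpr hsub
  have key : ∀ n : ℕ, (n : ℝ) / 2 ≤ 2⁻¹ / ‖w - 1‖ := by
    intro n
    have hgeom : ∑ i ∈ Finset.range n, w ^ i = (w ^ n - 1) / (w - 1) := geom_sum_eq hne n
    have h1 : ‖∑ i ∈ Finset.range n, w ^ i‖ ≤ 2⁻¹ / ‖w - 1‖ := by
      rw [hgeom, norm_div]
      exact div_le_div_of_nonneg_right (hw n) hnorm.le |>.trans_eq rfl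
    have h2 : (n : ℝ) / 2 ≤ (∑ i ∈ Finset.range n, w ^ i).re := by
      rw [Complex.re_sum]
      have : ∀ i ∈ Finset.range n, (2:ℝ)⁻¹ ≤ (w ^ i).re := by
        intro i _
        have := hw i
        have habs : |(w ^ i - 1).re| ≤ 2⁻¹ := (Complex.abs_re_le_norm _).trans this
        have : (w ^ i).re - 1 ≥ -2⁻¹ := by
          have := neg_le_of_abs_le habs
          simpa [Complex.sub_re] using this
        linarith
      calc (n : ℝ) / 2 = ∑ _i ∈ Finset.range n, (2:ℝ)⁻¹ := by
            simp [Finset.sum_const, mul_comm]; ring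
        _ ≤ _ := Finset.sum_le_sum this
    have h3 : (∑ i ∈ Finset.range n, w ^ i).re ≤ ‖∑ i ∈ Finset.range n, w ^ i‖ :=
      Complex.re_le_norm _
    linarith
  obtain ⟨n, hn⟩ := exists_nat_gt (2 * (2⁻¹ / ‖w - 1‖))
  have := key n
  nlinarith [div_nonneg (by norm_num : (0:ℝ) ≤ 2⁻¹) hnorm.le]

lemma exists_delta {p : ℕ} [Fact p.Prime] (θ : AddChar ℚ_[p] Circle) (hθcont : Continuous θ) :
    ∃ δ : ℝ, 0 < δ ∧ ∀ x : ℚ_[p], ‖x‖ ≤ δ → θ x = 1 := by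
  have hcoe : Continuous fun x : ℚ_[p] => ((θ x : Circle) : ℂ) :=
    continuous_subtype_val.comp hθcont
  have h0 : ((θ 0 : Circle) : ℂ) = 1 := by rw [AddChar.map_zero_eq_one]; rfl
  have := Metric.continuous_iff.mp hcoe 0 2⁻¹ (by norm_num)
  obtain ⟨δ₀, hδ₀, hball⟩ := this
  refine ⟨δ₀ / 2, by positivity, fun x hx => ?_⟩
  have hxn : ∀ n : ℕ, ‖((θ x : Circle) : ℂ) ^ n - 1‖ ≤ 2⁻¹ := by
    intro n
    have hmem : ‖(n : ℚ_[p]) * x‖ ≤ δ₀ / 2 := by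
      calc ‖(n : ℚ_[p]) * x‖ = ‖(n : ℚ_[p])‖ * ‖x‖ := norm_mul _ _
        _ ≤ 1 * (δ₀ / 2) := by
            apply mul_le_mul _ hx (norm_nonneg _) zero_le_one
            exact_mod_cast Padic.norm_int_le_one (n : ℤ)
        _ = δ₀ / 2 := one_mul _
    have hdist : dist ((n : ℚ_[p]) * x) 0 < δ₀ := by
      rw [dist_zero_right]; linarith
    have := hball _ hdist
    rw [h0] at this
    have hpow : ((θ ((n : ℚ_[p]) * x) : Circle) : ℂ) = ((θ x : Circle) : ℂ) ^ n := by
      rw [← nsmul_eq_mul, AddChar.map_nsmul_eq_pow]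
      norm_cast
    rw [hpow] at this
    rw [Complex.dist_eq] at this
    calc ‖((θ x : Circle) : ℂ) ^ n - 1‖ = ‖((θ x : Circle) : ℂ) ^ n - 1‖ := rfl
      _ ≤ 2⁻¹ := this.le
  have : ((θ x : Circle) : ℂ) = 1 := aux_w_eq_one hxn
  exact Subtype.ext this

open Matrix Polynomial in
lemma eval_charpoly_neg {p m : ℕ} [Fact p.Prime] (g : Matrix (Fin m) (Fin m) ℚ_[p]) (t : ℚ_[p]) :
    ((-g).charpoly).eval t = (g + t • 1).det := by
  rw [Matrix.charpoly, _root_.eval_det, matPolyEquiv_charmatrix]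
  rw [Polynomial.eval_sub, Polynomial.eval_X, Polynomial.eval_C]
  congr 1
  rw [Matrix.scalar_apply, Matrix.smul_one_eq_diagonal]
  rw [sub_neg_eq_add, add_comm]

open Matrix Polynomial in
lemma eventually_isUnit {p m : ℕ} [Fact p.Prime] (g : Matrix (Fin m) (Fin m) ℚ_[p]) :
    ∀ᶠ n : ℕ in Filter.atTop, IsUnit (g + ((p : ℚ_[p]) ^ n) • 1) := by
  have hq0 : (-g).charpoly ≠ 0 := (Matrix.charpoly_monic _).ne_zero
  have hfin : {t : ℚ_[p] | ((-g).charpoly).IsRoot t}.Finite :=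
    Polynomial.finite_setOf_isRoot hq0
  have hppos : (0:ℝ) < ‖(p : ℚ_[p])‖ := by
    rw [Padic.norm_p]
    have := (Fact.out : p.Prime).two_le
    positivity
  have hplt : ‖(p : ℚ_[p])‖ < 1 := Padic.norm_p_lt_one
  have hinj : Function.Injective fun n : ℕ => (p : ℚ_[p]) ^ n := by
    intro a b hab
    simp only at hab
    have : ‖(p : ℚ_[p])‖ ^ a = ‖(p : ℚ_[p])‖ ^ b := by
      rw [← norm_pow, ← norm_pow, hab]
    exact (pow_right_injective₀ hppos (ne_of_lt hplt)).eq_iff.mp this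
  have hbadfin : {n : ℕ | ¬ IsUnit (g + ((p : ℚ_[p]) ^ n) • 1)}.Finite := by
    apply Set.Finite.subset (hfin.preimage (hinj.injOn))
    intro n hn
    simp only [Set.mem_setOf_eq] at hn ⊢
    show ((-g).charpoly).IsRoot ((p : ℚ_[p]) ^ n)
    rw [Polynomial.IsRoot, eval_charpoly_neg]
    by_contra hdet
    exact hn ((Matrix.isUnit_iff_isUnit_det _).mpr (isUnit_iff_ne_zero.mpr hdet))
  rw [← Nat.cofinite_eq_atTop]
  exact hbadfin.eventually_cofinite_notMem.mono (fun n hn => not_not.mp hn)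

def latt (p m : ℕ) [Fact p.Prime] (r : ℝ) : Set (Matrix (Fin m) (Fin m) ℚ_[p]) :=
  {g | ∀ i j, ‖g i j‖ ≤ r}

variable {p m : ℕ} [Fact p.Prime]

lemma isOpen_qball (r : ℝ) (hr : 0 < r) : IsOpen {x : ℚ_[p] | ‖x‖ ≤ r} := by
  rw [Metric.isOpen_iff]
  intro x hx
  refine ⟨r, hr, fun y hy => ?_⟩
  have h1 : ‖y - x‖ < r := by rwa [Metric.mem_ball, dist_eq_norm] at hy
  have : ‖y‖ ≤ max ‖y - x‖ ‖x‖ := by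
    simpa [sub_add_cancel] using Padic.nonarchimedean (y - x) x
  exact this.trans (max_le h1.le hx)

lemma latt_isOpen {r : ℝ} (hr : 0 < r) : IsOpen (latt p m r) := by
  have : latt p m r = ⋂ i, ⋂ j, (fun g : Matrix (Fin m) (Fin m) ℚ_[p] => g i j) ⁻¹'
      {x : ℚ_[p] | ‖x‖ ≤ r} := by
    ext g; simp [latt, Set.mem_iInter]
  rw [this]
  exact isOpen_iInter_of_finite fun i => isOpen_iInter_of_finite fun j =>
    (isOpen_qball r hr).preimage (continuous_id.matrix_elem i j)

lemma latt_isCompact (r : ℝ) : IsCompact (latt p m r) := by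
  have himg : latt p m r = Matrix.of ''
      (Set.univ.pi fun _ : Fin m => Set.univ.pi fun _ : Fin m => Metric.closedBall (0:ℚ_[p]) r) := by
    ext g
    constructor
    · intro hg
      exact ⟨fun i j => g i j, by
        simp only [Set.mem_pi, Set.mem_univ, forall_true_left, mem_closedBall_zero_iff]
        exact fun i j => hg i j, rfl⟩
    · rintro ⟨x, hx, rfl⟩ i j
      simp only [Set.mem_pi, Set.mem_univ, forall_true_left, mem_closedBall_zero_iff] at hx
      exact hx i j
  rw [himg]
  apply IsCompact.image
  · exact isCompact_univ_pi fun i => isCompact_univ_pi fun j => isCompact_closedBall 0 r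
  · exact continuous_matrix fun i j => (continuous_apply j).comp (continuous_apply i)

lemma latt_zero_mem {r : ℝ} (hr : 0 ≤ r) : (0 : Matrix (Fin m) (Fin m) ℚ_[p]) ∈ latt p m r :=
  fun i j => by simp [hr]

lemma latt_add {r : ℝ} {a b : Matrix (Fin m) (Fin m) ℚ_[p]} (ha : a ∈ latt p m r)
    (hb : b ∈ latt p m r) : a + b ∈ latt p m r := by
  intro i j
  have := Padic.nonarchimedean (a i j) (b i j)
  exact le_trans (by simpa [Matrix.add_apply] using this) (max_le (ha i j) (hb i j))

lemma latt_neg {r : ℝ} {a : Matrix (Fin m) (Fin m) ℚ_[p]} (ha : a ∈ latt p m r) :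
    -a ∈ latt p m r := by
  intro i j
  simpa [Matrix.neg_apply] using ha i j

end PadicFourierAux

open PadicFourierAux

/-- Let `θ` be a nontrivial (continuous) additive character of `ℚ_p` and `μ` a Haar measure
on `(M_m(ℚ_p), +)`.  If `f : M_m(ℚ_p) → ℂ` is locally constant and `μ`-integrable, and its
Fourier transform `g ↦ ∫ f(y) θ(tr(gy)) dμ(y)` vanishes for every invertible matrix `g`,
then `f` is identically zero. -/
theorem fourier_vanishing_on_invertibles (p : ℕ) [Fact p.Prime] (m : ℕ) (hm : 1 ≤ m)
    (θ : AddChar ℚ_[p] Circle) (hθcont : Continuous θ) (hθ : θ ≠ 1)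
    (μ : Measure (Matrix (Fin m) (Fin m) ℚ_[p])) (hμ : μ.IsAddHaarMeasure)
    (f : Matrix (Fin m) (Fin m) ℚ_[p] → ℂ)
    (hf_lc : IsLocallyConstant f) (hf_int : Integrable f μ)
    (h : ∀ g : Matrix (Fin m) (Fin m) ℚ_[p], IsUnit g →
      (∫ y, f y * (θ (Matrix.trace (g * y)) : ℂ) ∂μ) = 0) :
    f = 0 := by
  haveI := hμ
  have hf_cont : Continuous f := hf_lc.continuous
  have hcirc : ∀ w : Circle, ‖(w : ℂ)‖ = 1 := fun w => by
    simp [Circle.norm_coe]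
  have hθC : Continuous fun x : ℚ_[p] => ((θ x : Circle) : ℂ) :=
    continuous_subtype_val.comp hθcont
  -- Step 1: the Fourier transform vanishes everywhere (density of invertibles + DCT)
  have hhat : ∀ g : Matrix (Fin m) (Fin m) ℚ_[p],
      (∫ y, f y * (θ (Matrix.trace (g * y)) : ℂ) ∂μ) = 0 := by
    intro g
    have hker : ∀ M : Matrix (Fin m) (Fin m) ℚ_[p],
        Continuous fun y : Matrix (Fin m) (Fin m) ℚ_[p] =>
          f y * (θ (Matrix.trace (M * y)) : ℂ) := by
      intro M
      exact hf_cont.mul (hθC.comp ((continuous_const.matrix_mul continuous_id).matrix_trace))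
    have hpn : Filter.Tendsto (fun n : ℕ => (p : ℚ_[p]) ^ n) Filter.atTop (nhds 0) :=
      tendsto_pow_atTop_nhds_zero_of_norm_lt_one Padic.norm_p_lt_one
    have hMtend : Filter.Tendsto
        (fun n : ℕ => g + ((p : ℚ_[p]) ^ n) • (1 : Matrix (Fin m) (Fin m) ℚ_[p]))
        Filter.atTop (nhds g) := by
      have : Filter.Tendsto
          (fun n : ℕ => ((p : ℚ_[p]) ^ n) • (1 : Matrix (Fin m) (Fin m) ℚ_[p])) Filter.atTop
          (nhds ((0 : ℚ_[p]) • (1 : Matrix (Fin m) (Fin m) ℚ_[p]))) := hpn.smul_const _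
      rw [zero_smul] at this
      simpa using (tendsto_const_nhds (x := g)).add this
    have htend : Filter.Tendsto
        (fun n : ℕ => ∫ y, f y * (θ (Matrix.trace ((g + ((p : ℚ_[p]) ^ n) • 1) * y)) : ℂ) ∂μ)
        Filter.atTop (nhds (∫ y, f y * (θ (Matrix.trace (g * y)) : ℂ) ∂μ)) := by
      apply tendsto_integral_of_dominated_convergence (fun y => ‖f y‖)
      · intro n; exact (hker _).aestronglyMeasurable
      · exact hf_int.norm
      · intro n
        filter_upwards with y
        rw [norm_mul, hcirc, mul_one]
      · filter_upwards with y
        have hcont : Continuous fun M : Matrix (Fin m) (Fin m) ℚ_[p] =>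
            f y * (θ (Matrix.trace (M * y)) : ℂ) :=
          continuous_const.mul (hθC.comp ((continuous_id.matrix_mul continuous_const).matrix_trace))
        exact (hcont.tendsto g).comp hMtend
    have hzero : ∀ᶠ n : ℕ in Filter.atTop,
        (∫ y, f y * (θ (Matrix.trace ((g + ((p : ℚ_[p]) ^ n) • 1) * y)) : ℂ) ∂μ) = 0 := by
      filter_upwards [eventually_isUnit g] with n hn
      exact h _ hn
    exact tendsto_nhds_unique htend
      (tendsto_const_nhds.congr' (hzero.mono fun n hn => hn.symm))
  -- Step 2: pointwise vanishing of f
  funext x₀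
  simp only [Pi.zero_apply]
  by_contra hx₀
  -- a point where θ is nontrivial
  obtain ⟨c₀, hc₀⟩ : ∃ c : ℚ_[p], θ c ≠ 1 := by
    by_contra hall
    push_neg at hall
    exact hθ (DFunLike.ext θ 1 fun x => (hall x).trans (AddChar.one_apply x).symm)
  have hc₀C : ((θ c₀ : Circle) : ℂ) ≠ 1 := fun hh => hc₀ (Subtype.ext hh)
  have hc₀0 : c₀ ≠ 0 := fun hh => hc₀ (by rw [hh]; exact θ.map_zero_eq_one)
  have hc₀pos : 0 < ‖c₀‖ := norm_pos_iff.mpr hc₀0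
  obtain ⟨δ, hδpos, hδ⟩ := exists_delta θ hθcont
  -- local constancy radius
  obtain ⟨ε, hεpos, hε⟩ : ∃ ε : ℝ, 0 < ε ∧
      ∀ z : Matrix (Fin m) (Fin m) ℚ_[p], (∀ i j, ‖z i j‖ ≤ ε) → f (x₀ + z) = f x₀ := by
    have hU : IsOpen (f ⁻¹' {f x₀}) := hf_lc.isOpen_fiber _
    have hcont2 : Continuous fun z : Fin m → Fin m → ℚ_[p] => x₀ + Matrix.of z :=
      continuous_const.add
        (continuous_matrix fun i j => (continuous_apply j).comp (continuous_apply i))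
    have hU2 : IsOpen ((fun z : Fin m → Fin m → ℚ_[p] => x₀ + Matrix.of z) ⁻¹' (f ⁻¹' {f x₀})) :=
      hU.preimage hcont2
    have h0mem : (0 : Fin m → Fin m → ℚ_[p]) ∈
        (fun z : Fin m → Fin m → ℚ_[p] => x₀ + Matrix.of z) ⁻¹' (f ⁻¹' {f x₀}) := by
      have hzero : x₀ + Matrix.of (0 : Fin m → Fin m → ℚ_[p]) = x₀ := by
        ext i j
        simp [Matrix.of_apply]
      simp only [Set.mem_preimage, Set.mem_singleton_iff, hzero]
    obtain ⟨r, hrpos, hr⟩ := Metric.isOpen_iff.mp hU2 0 h0mem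
    refine ⟨r/2, by positivity, fun z hz => ?_⟩
    have hmem : (fun i j => z i j) ∈ Metric.ball (0 : Fin m → Fin m → ℚ_[p]) r := by
      rw [Metric.mem_ball, dist_pi_lt_iff hrpos]
      intro i
      rw [dist_pi_lt_iff hrpos]
      intro j
      rw [Pi.zero_apply, Pi.zero_apply, dist_eq_norm, sub_zero]
      exact lt_of_le_of_lt (hz i j) (by linarith)
    exact hr hmem
  -- radii
  have hmpos : (0:ℝ) < (m:ℝ) := by exact_mod_cast Nat.lt_of_lt_of_le Nat.zero_lt_one hm
  set ρ : ℝ := ‖c₀‖ / ε with hρ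
  have hρpos : 0 < ρ := div_pos hc₀pos hεpos
  set η : ℝ := δ / (ρ * (m : ℝ)^2) with hη
  have hηpos : 0 < η := by positivity
  set S := latt p m ρ with hSdef
  have hSmeas : MeasurableSet S := (latt_isCompact ρ).isClosed.measurableSet
  have hSμpos : 0 < μ S := (latt_isOpen hρpos).measure_pos μ ⟨0, latt_zero_mem hρpos.le⟩
  have hSμfin : μ S < ⊤ := (latt_isCompact ρ).measure_lt_top
  set T : Set (Matrix (Fin m) (Fin m) ℚ_[p]) :=
    {z | ∀ g ∈ S, ((θ (Matrix.trace (g * z)) : Circle) : ℂ) = 1} with hTdef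
  -- T contains a small lattice
  have hTball : latt p m η ⊆ T := by
    intro z hz g hg
    have htr : ‖Matrix.trace (g * z)‖ ≤ δ := by
      have h1 : Matrix.trace (g * z) = ∑ a : Fin m, ∑ k : Fin m, g a k * z k a := by
        simp [Matrix.trace, Matrix.diag, Matrix.mul_apply]
      rw [h1]
      calc ‖∑ a : Fin m, ∑ k : Fin m, g a k * z k a‖
          ≤ ∑ a : Fin m, ‖∑ k : Fin m, g a k * z k a‖ := norm_sum_le _ _
        _ ≤ ∑ a : Fin m, ∑ k : Fin m, ‖g a k * z k a‖ :=
            Finset.sum_le_sum fun a _ => norm_sum_le _ _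
        _ ≤ ∑ _a : Fin m, ∑ _k : Fin m, ρ * η := by
            refine Finset.sum_le_sum fun a _ => Finset.sum_le_sum fun k _ => ?_
            rw [norm_mul]
            exact mul_le_mul (hg a k) (hz k a) (norm_nonneg _) hρpos.le
        _ = (m:ℝ)^2 * (ρ * η) := by
            simp [Finset.sum_const, Finset.card_univ]
            ring
        _ = δ := by
            rw [hη]
            field_simp
    rw [hδ _ htr]
    rfl
  -- T is contained in the constancy lattice
  have hTsub : T ⊆ latt p m ε := by
    intro z hz
    by_contra hzout
    simp only [latt, Set.mem_setOf_eq, not_forall, not_le] at hzout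
    obtain ⟨i, j, hij⟩ := hzout
    have hzij : z i j ≠ 0 := by
      intro hh
      rw [hh, norm_zero] at hij
      linarith
    set t : ℚ_[p] := c₀ * (z i j)⁻¹ with ht
    have htn : ‖t‖ ≤ ρ := by
      rw [ht, norm_mul, norm_inv, hρ]
      rw [div_eq_mul_inv]
      apply mul_le_mul_of_nonneg_left _ (norm_nonneg c₀)
      exact inv_anti₀ hεpos hij.le
    have hgS : Matrix.single j i t ∈ S := by
      intro a b
      rw [Matrix.single]
      by_cases hab : j = a ∧ i = b
      · simp only [Matrix.of_apply, hab, if_true]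
        exact htn
      · simp only [Matrix.of_apply, hab, if_false]
        simp [hρpos.le]
    have htrace : Matrix.trace (Matrix.single j i t * z) = t * z i j := by
      simp only [Matrix.trace, Matrix.diag, Matrix.mul_apply, Matrix.single,
        Matrix.of_apply, ite_mul, zero_mul]
      rw [Finset.sum_comm]
      simp [Finset.sum_ite_eq, ite_and]
    have := hz _ hgS
    rw [htrace] at this
    have hcval : t * z i j = c₀ := by
      rw [ht]
      field_simp
    rw [hcval] at this
    exact hc₀C this
  have hTmeas : MeasurableSet T := by
    have hclosed : IsClosed T := by
      have : T = ⋂ g ∈ S, {z : Matrix (Fin m) (Fin m) ℚ_[p] |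
          ((θ (Matrix.trace (g * z)) : Circle) : ℂ) = 1} := by
        ext z; simp [hTdef]
      rw [this]
      refine isClosed_biInter fun g _ => isClosed_eq ?_ continuous_const
      exact hθC.comp ((continuous_const.matrix_mul continuous_id).matrix_trace)
    exact hclosed.measurableSet
  have hTμfin : μ T < ⊤ :=
    lt_of_le_of_lt (measure_mono hTsub) (latt_isCompact ε).measure_lt_top
  have hTμpos : 0 < μ T :=
    lt_of_lt_of_le ((latt_isOpen hηpos).measure_pos μ ⟨0, latt_zero_mem hηpos.le⟩)
      (measure_mono hTball)
  -- orthogonality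
  have orth : ∀ z : Matrix (Fin m) (Fin m) ℚ_[p], z ∉ T →
      (∫ g in S, ((θ (Matrix.trace (g * z)) : Circle) : ℂ) ∂μ) = 0 := by
    intro z hz
    simp only [hTdef, Set.mem_setOf_eq, not_forall] at hz
    obtain ⟨g₀, hg₀S, hg₀⟩ := hz
    set c : Matrix (Fin m) (Fin m) ℚ_[p] → ℂ :=
      fun g => ((θ (Matrix.trace (g * z)) : Circle) : ℂ) with hc
    have hmulc : ∀ g g' : Matrix (Fin m) (Fin m) ℚ_[p], c (g + g') = c g * c g' := by
      intro g g'
      simp only [hc]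
      rw [Matrix.add_mul, Matrix.trace_add, AddChar.map_add_eq_mul]
      norm_cast
    have hSindic : ∀ g, S.indicator c (g₀ + g) = S.indicator (fun x => c (g₀ + x)) g := by
      intro g
      by_cases hgS : g ∈ S
      · rw [Set.indicator_of_mem hgS, Set.indicator_of_mem (latt_add hg₀S hgS)]
      · rw [Set.indicator_of_notMem hgS, Set.indicator_of_notMem]
        intro hmem
        have h2 := latt_add (latt_neg hg₀S) hmem
        simp only [neg_add_cancel_left] at h2
        exact hgS h2
    have key : (∫ g in S, c g ∂μ) = c g₀ * ∫ g in S, c g ∂μ := by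
      conv_lhs => rw [← integral_indicator hSmeas,
        ← integral_add_left_eq_self (S.indicator c) g₀]
      calc (∫ g, S.indicator c (g₀ + g) ∂μ)
          = ∫ g, S.indicator (fun x => c (g₀ + x)) g ∂μ := by simp_rw [hSindic]
        _ = ∫ g in S, c (g₀ + g) ∂μ := integral_indicator hSmeas
        _ = ∫ g in S, c g₀ * c g ∂μ := by simp_rw [hmulc]
        _ = c g₀ * ∫ g in S, c g ∂μ := integral_const_mul _ _
    have hfactor : (1 - c g₀) * (∫ g in S, c g ∂μ) = 0 := by
      linear_combination key
    rcases mul_eq_zero.mp hfactor with h1 | h2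
    · exact absurd ((sub_eq_zero.mp h1).symm) hg₀
    · exact h2
  -- Fubini
  haveI : IsFiniteMeasure (μ.restrict S) := ⟨by rwa [Measure.restrict_apply_univ]⟩
  set Φ : Matrix (Fin m) (Fin m) ℚ_[p] → Matrix (Fin m) (Fin m) ℚ_[p] → ℂ :=
    fun g y => f y * ((θ (Matrix.trace (g * (y - x₀))) : Circle) : ℂ) with hΦ
  have hΦcont : Continuous (Function.uncurry Φ) := by
    apply Continuous.mul (hf_cont.comp continuous_snd)
    exact hθC.comp ((continuous_fst.matrix_mul (continuous_snd.sub continuous_const)).matrix_trace)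
  have hΦint : Integrable (Function.uncurry Φ) ((μ.restrict S).prod μ) := by
    apply Integrable.mono' ((integrable_const (1:ℝ)).mul_prod hf_int.norm)
      hΦcont.aestronglyMeasurable
    filter_upwards with q
    rw [Function.uncurry, hΦ]
    simp only
    rw [norm_mul, hcirc, mul_one, one_mul]
  have hswap := integral_integral_swap hΦint
  have hL : (∫ g, ∫ y, Φ g y ∂μ ∂(μ.restrict S)) = 0 := by
    have hinner0 : ∀ g, (∫ y, Φ g y ∂μ) = 0 := by
      intro g
      have expand : ∀ y, Φ g y =
          (f y * ((θ (Matrix.trace (g * y)) : Circle) : ℂ)) *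
            (((θ (Matrix.trace (g * x₀)) : Circle) : ℂ))⁻¹ := by
        intro y
        rw [hΦ]
        have htr : Matrix.trace (g * (y - x₀)) =
            Matrix.trace (g * y) - Matrix.trace (g * x₀) := by
          rw [Matrix.mul_sub, Matrix.trace_sub]
        simp only
        rw [htr, sub_eq_add_neg, AddChar.map_add_eq_mul, AddChar.map_neg_eq_inv]
        push_cast
        ring
      simp_rw [expand]
      rw [integral_mul_const, hhat g, zero_mul]
    simp [hinner0]
  rw [hL] at hswap
  -- evaluate the inner integral in the swapped order
  have hindic : ∀ y, (∫ g, Φ g y ∂(μ.restrict S)) =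
      f y * Set.indicator T (fun _ => ((μ S).toReal : ℂ)) (y - x₀) := by
    intro y
    have h1 : (∫ g, Φ g y ∂(μ.restrict S)) =
        f y * ∫ g in S, ((θ (Matrix.trace (g * (y - x₀))) : Circle) : ℂ) ∂μ :=
      integral_const_mul _ _
    rw [h1]
    congr 1
    by_cases hmem : y - x₀ ∈ T
    · rw [Set.indicator_of_mem hmem]
      have hone : ∀ g ∈ S, ((θ (Matrix.trace (g * (y - x₀))) : Circle) : ℂ) = 1 := hmem
      rw [setIntegral_congr_fun hSmeas hone, setIntegral_const]
      simp [smul_eq_mul, Measure.real]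
    · rw [Set.indicator_of_notMem hmem]
      exact orth _ hmem
  rw [funext hindic] at hswap
  set C : ℂ := ((μ S).toReal : ℂ) with hC
  set W : Set (Matrix (Fin m) (Fin m) ℚ_[p]) := (fun y => y - x₀) ⁻¹' T with hW
  have hWmeas : MeasurableSet W :=
    hTmeas.preimage ((continuous_id.sub continuous_const).measurable)
  have hfuneq : (fun y => f y * T.indicator (fun _ => C) (y - x₀)) =
      fun y => W.indicator (fun y' => C * f y') y := by
    funext y
    by_cases hy : y - x₀ ∈ T
    · have hyW : y ∈ W := hy
      rw [show T.indicator (fun _ => C) (y - x₀) = C from Set.indicator_of_mem hy _,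
        show W.indicator (fun y' => C * f y') y = C * f y from Set.indicator_of_mem hyW _]
      ring
    · have hyW : y ∉ W := hy
      rw [show T.indicator (fun _ => C) (y - x₀) = 0 from Set.indicator_of_notMem hy _,
        show W.indicator (fun y' => C * f y') y = 0 from Set.indicator_of_notMem hyW _,
        mul_zero]
  rw [hfuneq] at hswap
  rw [integral_indicator hWmeas, integral_const_mul] at hswap
  have htrans : (∫ y in W, f y ∂μ) = (μ T).toReal • f x₀ := by
    calc (∫ y in W, f y ∂μ) = ∫ y, W.indicator f y ∂μ := (integral_indicator hWmeas).symm
      _ = ∫ z, W.indicator f (x₀ + z) ∂μ := (integral_add_left_eq_self (W.indicator f) x₀).symm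
      _ = ∫ z, T.indicator (fun z' => f (x₀ + z')) z ∂μ := by
          congr 1
          funext z
          by_cases hzT : z ∈ T
          · rw [Set.indicator_of_mem hzT, Set.indicator_of_mem]
            show x₀ + z - x₀ ∈ T
            simpa [add_sub_cancel_left] using hzT
          · rw [Set.indicator_of_notMem hzT, Set.indicator_of_notMem]
            intro hmem
            have : x₀ + z - x₀ ∈ T := hmem
            rw [add_sub_cancel_left] at this
            exact hzT this
      _ = ∫ z in T, f (x₀ + z) ∂μ := integral_indicator hTmeas
      _ = ∫ z in T, f x₀ ∂μ := setIntegral_congr_fun hTmeas (fun z hz => hε z (hTsub hz))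
      _ = (μ T).toReal • f x₀ := setIntegral_const _
  rw [htrans, Complex.real_smul] at hswap
  have hCne : C ≠ 0 := by
    rw [hC]
    simp only [ne_eq, Complex.ofReal_eq_zero]
    exact (ENNReal.toReal_pos hSμpos.ne' hSμfin.ne).ne'
  have hTne : (μ T).toReal ≠ 0 := (ENNReal.toReal_pos hTμpos.ne' hTμfin.ne).ne'
  rcases mul_eq_zero.mp hswap.symm with h1 | h2
  · exact absurd h1 hCne
  rcases mul_eq_zero.mp h2 with h3 | h4
  · exact absurd (by exact_mod_cast h3) hTne
  · exact absurd h4 hx₀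
end
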